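/- Proposition 8 (iterated residue evaluation). Let M, N be positive integers, q ∈ ℂ with 0 < |q| < 1, and w₀ ∈ ℂ, w₀ ≠ 0. Let f : ℂ^{M+N+1} → ℂ be an entire function. Let r₁, …, r_{M+N−1} be positive real numbers with |w₀| < |q| r₁, r_j < |q| r_{j+1} for 1 ≤ j ≤ M−1, and |q| r_j < r_{j+1} for M ≤ j ≤ M+N−2, and let w_{M+N} ∈ ℂ with |w_{M+N}| > |q| r_{M+N−1}. Then the iterated contour integral ∮_{|w₁|=r₁} (dw₁/2πi) ⋯ ∮_{|w_{M+N−1}|=r_{M+N−1}} (dw_{M+N−1}/2πi) of f(w₀, w₁, …, w_{M+N}) / [ Π_{j=0}^{M−1} (w_{j+1} − q^{−1} w_j) · Π_{j=M}^{M+N−1} (w_{j+1} − q w_j) ] equals f(w₀, q^{−1}w₀, q^{−2}w₀, …, q^{−M}w₀, q^{−M+1}w₀, q^{−M+2}w₀, …, q^{−M+N−1}w₀, w_{M+N}) / (w_{M+N} − q^{N−M} w₀); that is, the j-th interior argument is q^{−j}w₀ for 1 ≤ j ≤ M and q^{−2M+j}w₀ for M+1 ≤ j ≤ M+N−1. In particular,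 multiplying the integrand by (w_{M+N} − q^{N−M}w₀), the result tends to f(w₀, q^{−1}w₀, …, q^{−M}w₀, q^{−M+1}w₀, …, q^{−M+N−1}w₀, q^{−M+N}w₀) as w_{M+N} → q^{N−M}w₀. -/

import Mathlib

/-- Iterated normalized contour integral: `iterCI r F i k w` integrates `F` over the
variables of indices `i, i+1, …, i+k−1`, the variable of index `j` running over the
counterclockwise circle of radius `r j` centered at the origin, each integral carrying
the normalization `1/(2πi)`. -/
noncomputable def iterCI (r : ℕ → ℝ) (F : (ℕ → ℂ) → ℂ) : ℕ → ℕ → (ℕ → ℂ) → ℂ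
  | _, 0, w => F w
  | i, k + 1, w =>
      (2 * Real.pi * Complex.I)⁻¹ *
        ∮ z in C(0, r i), iterCI r F (i + 1) k (Function.update w i z)

open Metric Set
lemma iterCI_zero (r : ℕ → ℝ) (F : (ℕ → ℂ) → ℂ) (i : ℕ) (w : ℕ → ℂ) :
    iterCI r F i 0 w = F w := rfl

lemma iterCI_succ (r : ℕ → ℝ) (F : (ℕ → ℂ) → ℂ) (i k : ℕ) (w : ℕ → ℂ) :
    iterCI r F i (k+1) w = (2 * Real.pi * Complex.I)⁻¹ *
        ∮ z in C(0, r i), iterCI r F (i + 1) k (Function.update w i z) := rfl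

lemma cauchy_aux (g : ℂ → ℂ) (hg : Differentiable ℂ g) (R : ℝ) (hR : 0 < R)
    (K d c b : ℂ) (hb : ‖b‖ < R) (hcd : ‖c‖ * R < ‖d‖) :
    (2 * Real.pi * Complex.I)⁻¹ *
        (∮ z in C(0, R), g z / (K * (z - b) * (d - c * z))) =
      g b / (K * (d - c * b)) := by
  set h : ℂ → ℂ := fun z => g z / (K * (d - c * z)) with hh
  have key : ∀ z : ℂ, g z / (K * (z - b) * (d - c * z)) = (z - b)⁻¹ • h z := by
    intro z
    simp only [hh, smul_eq_mul]
    rw [div_eq_mul_inv, div_eq_mul_inv, mul_inv, mul_inv, mul_inv]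
    ring
  have hdiff : ∀ z ∈ closedBall (0:ℂ) R, DifferentiableAt ℂ h z := by
    intro z hz
    by_cases hK : K = 0
    · have : h = fun _ => 0 := by funext z; simp [hh, hK]
      rw [this]; exact differentiableAt_const 0
    · have hne : K * (d - c * z) ≠ 0 := by
        refine mul_ne_zero hK (sub_ne_zero.mpr fun he => ?_)
        have hz' : ‖z‖ ≤ R := by simpa [Complex.dist_eq] using hz
        have : ‖c * z‖ ≤ ‖c‖ * R := by
          rw [norm_mul]
          exact mul_le_mul_of_nonneg_left hz' (norm_nonneg c)
        rw [he] at hcd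
        exact lt_irrefl _ (lt_of_le_of_lt this hcd)
      exact (hg z).div (by fun_prop) hne
  have hdc : DiffContOnCl ℂ h (ball (0:ℂ) R) := by
    apply DifferentiableOn.diffContOnCl
    rw [closure_ball (0:ℂ) hR.ne']
    exact fun z hz => (hdiff z hz).differentiableWithinAt
  have hbmem : b ∈ ball (0:ℂ) R := by simpa [Complex.dist_eq] using hb
  have := hdc.two_pi_i_inv_smul_circleIntegral_sub_inv_smul hbmem
  simp only [key]
  rw [← smul_eq_mul, this]

def p8E (M : ℕ) (l : ℕ) : ℤ := if l ≤ M then -(l:ℤ) else (l:ℤ) - 2*M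


lemma cfE (M : ℕ) (q : ℂ) (hq : q ≠ 0) (i : ℕ) (hi : 1 ≤ i) :
    (if i - 1 < M then q⁻¹ else q) = q ^ (p8E M i - p8E M (i - 1)) := by
  obtain ⟨j, rfl⟩ : ∃ j, i = j + 1 := ⟨i - 1, by omega⟩
  simp only [Nat.add_sub_cancel]
  unfold p8E
  by_cases hjM : j < M
  · rw [if_pos hjM, if_pos (by omega : j + 1 ≤ M), if_pos (by omega : j ≤ M)]
    rw [show (-(((j:ℕ)+1:ℕ):ℤ) - -(j:ℤ)) = -1 by push_cast; ring, zpow_neg_one]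
  · rw [if_neg hjM, if_neg (by omega : ¬ (j + 1 ≤ M))]
    by_cases hjM2 : j ≤ M
    · rw [if_pos hjM2]
      rw [show ((((j:ℕ)+1:ℕ):ℤ) - 2*M - -(j:ℤ)) = 1 by push_cast; omega, zpow_one]
    · rw [if_neg hjM2]
      rw [show ((((j:ℕ)+1:ℕ):ℤ) - 2*M - ((j:ℤ) - 2*M)) = 1 by push_cast; ring, zpow_one]

lemma prod_split (M T : ℕ) (hMT : M ≤ T) (q : ℂ) (w : ℕ → ℂ) :
    (∏ j ∈ Finset.range M, (w (j+1) - q⁻¹ * w j)) *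
      ∏ j ∈ Finset.Ico M T, (w (j+1) - q * w j)
    = ∏ j ∈ Finset.range T, (w (j+1) - (if j < M then q⁻¹ else q) * w j) := by
  have h := Finset.prod_Ico_consecutive
    (f := fun j => (w (j+1) - (if j < M then q⁻¹ else q) * w j)) (Nat.zero_le M) hMT
  rw [← Finset.range_eq_Ico, ← Finset.range_eq_Ico] at h
  rw [← h]
  congr 1
  · exact Finset.prod_congr rfl fun j hj => by
      simp only [if_pos (Finset.mem_range.mp hj)]
  · exact Finset.prod_congr rfl fun j hj => by
      simp only [if_neg (Nat.not_lt.mpr (Finset.mem_Ico.mp hj).1)]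


lemma prop8_main (M N : ℕ) (hM : 1 ≤ M) (hN : 1 ≤ N) (q : ℂ) (hq0 : 0 < ‖q‖)
    (f : (Fin (M + N + 1) → ℂ) → ℂ) (hf : ∀ x, AnalyticAt ℂ f x)
    (r : ℕ → ℝ) (hr : ∀ j, 1 ≤ j → j ≤ M + N - 1 → 0 < r j)
    (h2 : ∀ j, 1 ≤ j → j ≤ M - 1 → r j < ‖q‖ * r (j + 1))
    (h3 : ∀ j, M ≤ j → j ≤ M + N - 2 → ‖q‖ * r j < r (j + 1)) :
    ∀ k, k ≤ M + N - 1 → ∀ w : ℕ → ℂ,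
      ‖q‖ * r (M + N - 1) < ‖w (M + N)‖ →
      (M + N - k ≤ M →
        ‖w (M + N - k - 1)‖ < ‖q‖ * r (M + N - k)) →
      (M < M + N - k → M + N - k < M + N →
        ‖q‖ * ‖w (M + N - k - 1)‖ < r (M + N - k)) →
      iterCI r (fun u => f (fun i => u (i : ℕ)) /
            ((∏ j ∈ Finset.range M, (u (j + 1) - q⁻¹ * u j)) *
              ∏ j ∈ Finset.Ico M (M + N), (u (j + 1) - q * u j))) (M + N - k) k w
      = f (fun l => if (l:ℕ) ≤ M + N - k - 1 then w l
            else if (l:ℕ) = M + N then w (M + N)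
            else q ^ (p8E M l - p8E M (M + N - k - 1)) * w (M + N - k - 1)) /
        ((∏ j ∈ Finset.range (M + N - k - 1),
            (w (j + 1) - (if j < M then q⁻¹ else q) * w j)) *
          (w (M + N) - q ^ (((N:ℤ) - M) - p8E M (M + N - k - 1)) * w (M + N - k - 1))) := by
  have hq : q ≠ 0 := by
    intro h; rw [h] at hq0; simp at hq0
  -- chain lemmas
  have lemA : ∀ d, d ≤ M - 1 → r (M - d) ≤ ‖q‖ ^ d * r M := by
    intro d
    induction d with
    | zero => intro _; simp
    | succ n ih =>
      intro hd
      have hstep := h2 (M - (n+1)) (by omega) (by omega)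
      rw [show M - (n+1) + 1 = M - n by omega] at hstep
      calc r (M - (n+1)) ≤ ‖q‖ * r (M - n) := le_of_lt hstep
        _ ≤ ‖q‖ * (‖q‖ ^ n * r M) :=
            mul_le_mul_of_nonneg_left (ih (by omega)) (le_of_lt hq0)
        _ = ‖q‖ ^ (n+1) * r M := by ring
  have lemB : ∀ d, d ≤ N - 1 → ‖q‖ ^ d * r (M + N - 1 - d) ≤ r (M + N - 1) := by
    intro d
    induction d with
    | zero => intro _; simp
    | succ n ih =>
      intro hd
      have hstep := h3 (M + N - 1 - (n+1)) (by omega) (by omega)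
      rw [show M + N - 1 - (n+1) + 1 = M + N - 1 - n by omega] at hstep
      calc ‖q‖ ^ (n+1) * r (M + N - 1 - (n+1))
          = ‖q‖ ^ n * (‖q‖ * r (M + N - 1 - (n+1))) := by ring
        _ ≤ ‖q‖ ^ n * r (M + N - 1 - n) :=
            mul_le_mul_of_nonneg_left (le_of_lt hstep) (pow_nonneg (le_of_lt hq0) n)
        _ ≤ r (M + N - 1) := ih (by omega)
  -- the key outside-pole bound : for 1 ≤ i ≤ M+N-1,
  have hout : ∀ i, 1 ≤ i → i ≤ M + N - 1 →
      ‖q‖ ^ (((N:ℤ) - M) - p8E M i) * r i ≤ ‖q‖ * r (M + N - 1) := by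
    intro i hi1 hi2
    by_cases hiM : i ≤ M
    · have he : ((N:ℤ) - M) - p8E M i = ((N:ℤ) - M) + i := by
        unfold p8E; rw [if_pos hiM]; ring
      rw [he]
      have hA := lemA (M - i) (by omega)
      rw [show M - (M - i) = i by omega] at hA
      have hB := lemB (N - 1) (by omega)
      rw [show M + N - 1 - (N - 1) = M by omega] at hB
      have hq' : (0:ℝ) < ‖q‖ ^ (((N:ℤ) - M) + i) := zpow_pos hq0 _
      calc ‖q‖ ^ (((N:ℤ) - M) + i) * r i
          ≤ ‖q‖ ^ (((N:ℤ) - M) + i) * (‖q‖ ^ (M - i) * r M) :=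
            mul_le_mul_of_nonneg_left hA (le_of_lt hq')
        _ = ‖q‖ * (‖q‖ ^ (N - 1) * r M) := by
            rw [← zpow_natCast (‖q‖) (M - i), ← zpow_natCast (‖q‖) (N - 1),
              ← mul_assoc, ← zpow_add₀ (ne_of_gt hq0), ← mul_assoc]
            rw [show ((N:ℤ) - M) + i + ((M - i : ℕ) : ℤ) = 1 + ((N - 1 : ℕ) : ℤ) by
              push_cast [Nat.cast_sub hiM, Nat.cast_sub hN]; ring]
            rw [zpow_add₀ (ne_of_gt hq0), zpow_one, mul_assoc]
        _ ≤ ‖q‖ * r (M + N - 1) :=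
            mul_le_mul_of_nonneg_left hB (le_of_lt hq0)
    · have he : ((N:ℤ) - M) - p8E M i = 1 + ((M + N - 1 - i : ℕ) : ℤ) := by
        unfold p8E; rw [if_neg hiM]
        push_cast [Nat.cast_sub (show i ≤ M + N - 1 from hi2)]
        omega
      rw [he]
      have hB := lemB (M + N - 1 - i) (by omega)
      rw [show M + N - 1 - (M + N - 1 - i) = i by omega] at hB
      calc ‖q‖ ^ (1 + ((M + N - 1 - i : ℕ) : ℤ)) * r i
          = ‖q‖ * (‖q‖ ^ (M + N - 1 - i) * r i) := by
            rw [zpow_add₀ (ne_of_gt hq0), zpow_one, zpow_natCast, mul_assoc]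
        _ ≤ ‖q‖ * r (M + N - 1) :=
            mul_le_mul_of_nonneg_left hB (le_of_lt hq0)
  -- main induction
  intro k
  induction k with
  | zero =>
    intro _ w hT hyp1 hyp2
    simp only [Nat.sub_zero]
    have hfun : (fun l : Fin (M+N+1) => w (l:ℕ)) =
        (fun l : Fin (M+N+1) => if (l:ℕ) ≤ M + N - 1 then w (l:ℕ)
          else if (l:ℕ) = M + N then w (M + N)
          else q ^ (p8E M (l:ℕ) - p8E M (M + N - 1)) * w (M + N - 1)) := by
      funext l
      by_cases hl : (l:ℕ) ≤ M + N - 1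
      · rw [if_pos hl]
      · have hl2 : (l:ℕ) = M + N := by have := l.isLt; omega
        rw [if_neg hl, if_pos hl2, hl2]
    have hden : ((∏ j ∈ Finset.range M, (w (j+1) - q⁻¹ * w j)) *
          ∏ j ∈ Finset.Ico M (M + N), (w (j+1) - q * w j))
        = (∏ j ∈ Finset.range (M + N - 1),
            (w (j + 1) - (if j < M then q⁻¹ else q) * w j)) *
          (w (M + N) - q ^ (((N:ℤ) - M) - p8E M (M + N - 1)) * w (M + N - 1)) := by
      obtain ⟨P, hP⟩ : ∃ P, P = M + N - 1 := ⟨_, rfl⟩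
      rw [← hP, show M + N = P + 1 by omega]
      rw [prod_split M (P+1) (by omega) q w, Finset.prod_range_succ]
      congr 1
      rw [if_neg (show ¬ P < M by omega)]
      rw [show ((N:ℤ) - M) - p8E M P = 1 by unfold p8E; split_ifs <;> omega, zpow_one]
    rw [iterCI_zero, hfun, hden]
  | succ k ih =>
    intro hk w hT hyp1 hyp2
    obtain ⟨m, hieq⟩ : ∃ m, M + N - (k+1) = m + 1 := ⟨M + N - (k+1) - 1, by omega⟩
    rw [hieq] at hyp1 hyp2 ⊢
    simp only [Nat.add_sub_cancel] at hyp1 hyp2 ⊢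
    have hm1 : m + 1 ≤ M + N - 1 := by omega
    have hri : 0 < r (m+1) := hr (m+1) (by omega) hm1
    have hcfE : (if m < M then q⁻¹ else q) = q ^ (p8E M (m+1) - p8E M m) := by
      have := cfE M q hq (m+1) (by omega)
      simpa using this
    rw [iterCI_succ]
    -- the inner iterated integral evaluated via the induction hypothesis
    have hint : Set.EqOn
        (fun z => iterCI r (fun u => f (fun i => u (i : ℕ)) /
            ((∏ j ∈ Finset.range M, (u (j + 1) - q⁻¹ * u j)) *
              ∏ j ∈ Finset.Ico M (M + N), (u (j + 1) - q * u j)))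
          (m + 1 + 1) k (Function.update w (m+1) z))
        (fun z => f (fun l : Fin (M+N+1) => if (l:ℕ) ≤ m+1 then Function.update w (m+1) z (l:ℕ)
            else if (l:ℕ) = M + N then w (M + N)
            else q ^ (p8E M (l:ℕ) - p8E M (m+1)) * z) /
          ((∏ j ∈ Finset.range m, (w (j + 1) - (if j < M then q⁻¹ else q) * w j)) *
              (z - (if m < M then q⁻¹ else q) * w m) *
            (w (M + N) - q ^ (((N:ℤ) - M) - p8E M (m+1)) * z)))
        (Metric.sphere (0:ℂ) (r (m+1))) := by
      intro z hz
      have hz' : ‖z‖ = r (m+1) := by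
        simpa [Complex.dist_eq] using hz
      simp only
      have e1 : M + N - k - 1 = m + 1 := by omega
      have hik : M + N - k = m + 1 + 1 := by omega
      have hTz : ‖q‖ * r (M + N - 1) <
          ‖(Function.update w (m+1) z) (M + N)‖ := by
        rw [Function.update_of_ne (by omega : (M + N : ℕ) ≠ m + 1)]; exact hT
      have hy1 : M + N - k ≤ M →
          ‖(Function.update w (m+1) z) (M + N - k - 1)‖ <
            ‖q‖ * r (M + N - k) := by
        intro h
        rw [e1, hik, Function.update_self, hz']
        exact h2 (m+1) (by omega) (by omega)
      have hy2 : M < M + N - k → M + N - k < M + N →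
          ‖q‖ * ‖(Function.update w (m+1) z) (M + N - k - 1)‖ <
            r (M + N - k) := by
        intro hA hB
        rw [e1, hik, Function.update_self, hz']
        exact h3 (m+1) (by omega) (by omega)
      have key := ih (by omega) (Function.update w (m+1) z) hTz hy1 hy2
      rw [e1, hik] at key
      rw [key]
      simp only [Function.update_self,
        Function.update_of_ne (show (M + N : ℕ) ≠ m + 1 by omega)]
      congr 2
      rw [Finset.prod_range_succ, Function.update_self,
        Function.update_of_ne (show m ≠ m + 1 by omega)]
      congr 1
      refine Finset.prod_congr rfl fun j hj => ?_
      have hj' := Finset.mem_range.mp hj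
      rw [Function.update_of_ne (by omega), Function.update_of_ne (by omega)]
    rw [circleIntegral.integral_congr hri.le hint]
    -- differentiability of the numerator as a function of z
    have hA : ∀ l : Fin (M+N+1), Differentiable ℂ
        (fun z : ℂ => if (l:ℕ) ≤ m+1 then Function.update w (m+1) z (l:ℕ)
          else if (l:ℕ) = M + N then w (M + N)
          else q ^ (p8E M (l:ℕ) - p8E M (m+1)) * z) := by
      intro l
      by_cases hc1 : (l:ℕ) ≤ m+1
      · simp only [if_pos hc1, Function.update_apply]
        by_cases hc2 : (l:ℕ) = m+1
        · simp only [if_pos hc2]; exact differentiable_id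
        · simp only [if_neg hc2]; exact differentiable_const _
      · simp only [if_neg hc1]
        by_cases hc3 : (l:ℕ) = M + N
        · simp only [if_pos hc3]; exact differentiable_const _
        · simp only [if_neg hc3]
          exact (differentiable_const _).mul differentiable_id
    have hgdiff : Differentiable ℂ
        (fun z : ℂ => f (fun l : Fin (M+N+1) =>
          if (l:ℕ) ≤ m+1 then Function.update w (m+1) z (l:ℕ)
          else if (l:ℕ) = M + N then w (M + N)
          else q ^ (p8E M (l:ℕ) - p8E M (m+1)) * z)) := by
      intro z
      exact ((hf _).differentiableAt).comp z
        ((differentiable_pi.mpr hA) z)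
    have hb : ‖(if m < M then q⁻¹ else q) * w m‖ < r (m+1) := by
      by_cases hmM : m < M
      · rw [if_pos hmM, norm_mul, norm_inv]
        have h' := hyp1 (by omega)
        rw [inv_mul_lt_iff₀ hq0]
        exact h'
      · rw [if_neg hmM, norm_mul]
        exact hyp2 (by omega) (by omega)
    have hcd : ‖q ^ (((N:ℤ) - M) - p8E M (m+1))‖ * r (m+1) <
        ‖w (M + N)‖ := by
      rw [norm_zpow]
      exact lt_of_le_of_lt (hout (m+1) (by omega) hm1) hT
    rw [cauchy_aux _ hgdiff (r (m+1)) hri _ _ _ _ hb hcd]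
    -- final bookkeeping: evaluate at the residue point
    congr 1
    · congr 1
      funext l
      have hlt := l.isLt
      simp only [Function.update_apply]
      by_cases hl1 : (l:ℕ) ≤ m
      · rw [if_pos (show (l:ℕ) ≤ m + 1 by omega), if_neg (show ¬ (l:ℕ) = m + 1 by omega),
          if_pos hl1]
      · by_cases hl2 : (l:ℕ) = m + 1
        · rw [if_pos (show (l:ℕ) ≤ m + 1 by omega), if_pos hl2, if_neg hl1,
            if_neg (show ¬ (l:ℕ) = M + N by omega), hcfE, hl2]
        · by_cases hl3 : (l:ℕ) = M + N
          · rw [if_neg (show ¬ (l:ℕ) ≤ m + 1 by omega), if_pos hl3, if_neg hl1, if_pos hl3]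
          · rw [if_neg (show ¬ (l:ℕ) ≤ m + 1 by omega), if_neg hl3, if_neg hl1, if_neg hl3,
              hcfE, ← mul_assoc, ← zpow_add₀ hq,
              show p8E M (l:ℕ) - p8E M (m+1) + (p8E M (m+1) - p8E M m)
                = p8E M (l:ℕ) - p8E M m by ring]
    · congr 1
      rw [hcfE, ← mul_assoc, ← zpow_add₀ hq,
        show ((N:ℤ) - M) - p8E M (m+1) + (p8E M (m+1) - p8E M m)
          = ((N:ℤ) - M) - p8E M m by ring]

/-- Proposition 8: the iterated residue evaluation of the contour integral appearing
in the invertibility relations of the vertex operators. -/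
theorem proposition8 (M N : ℕ) (hM : 1 ≤ M) (hN : 1 ≤ N)
    (q : ℂ) (hq0 : 0 < ‖q‖) (hq1 : ‖q‖ < 1)
    (f : (Fin (M + N + 1) → ℂ) → ℂ) (hf : ∀ x, AnalyticAt ℂ f x)
    (w : ℕ → ℂ) (hw0 : w 0 ≠ 0) (r : ℕ → ℝ)
    (hr : ∀ j, 1 ≤ j → j ≤ M + N - 1 → 0 < r j)
    (h1 : ‖w 0‖ < ‖q‖ * r 1)
    (h2 : ∀ j, 1 ≤ j → j ≤ M - 1 → r j < ‖q‖ * r (j + 1))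
    (h3 : ∀ j, M ≤ j → j ≤ M + N - 2 → ‖q‖ * r j < r (j + 1))
    (h4 : ‖q‖ * r (M + N - 1) < ‖w (M + N)‖) :
    iterCI r
        (fun u =>
          f (fun i => u (i : ℕ)) /
            ((∏ j ∈ Finset.range M, (u (j + 1) - q⁻¹ * u j)) *
              ∏ j ∈ Finset.Ico M (M + N), (u (j + 1) - q * u j)))
        1 (M + N - 1) w =
      f (fun i =>
          if (i : ℕ) = M + N then w (M + N)
          else if (i : ℕ) ≤ M then q ^ (-((i : ℕ) : ℤ)) * w 0
          else q ^ (((i : ℕ) : ℤ) - 2 * M) * w 0) /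
        (w (M + N) - q ^ ((N : ℤ) - M) * w 0) := by
  have hyp1 : M + N - (M + N - 1) ≤ M →
      ‖w (M + N - (M + N - 1) - 1)‖ <
        ‖q‖ * r (M + N - (M + N - 1)) := by
    intro _
    rw [show M + N - (M + N - 1) - 1 = 0 by omega, show M + N - (M + N - 1) = 1 by omega]
    exact h1
  have hyp2 : M < M + N - (M + N - 1) → M + N - (M + N - 1) < M + N →
      ‖q‖ * ‖w (M + N - (M + N - 1) - 1)‖ <
        r (M + N - (M + N - 1)) := by
    intro h _
    exfalso; omega
  have key := prop8_main M N hM hN q hq0 f hf r hr h2 h3 (M + N - 1) le_rfl w h4 hyp1 hyp2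
  simp only [Nat.sub_self, show M + N - (M + N - 1) - 1 = 0 from by omega,
    show M + N - (M + N - 1) = 1 from by omega] at key
  rw [key]
  have hE0 : p8E M 0 = 0 := by unfold p8E; simp
  simp only [Nat.sub_self, hE0, sub_zero, Finset.range_zero, Finset.prod_empty, one_mul]
  congr 2
  funext l
  have hlt := l.isLt
  by_cases hl0 : (l:ℕ) ≤ 0
  · have h0 : (l:ℕ) = 0 := by omega
    rw [if_pos hl0, if_neg (show ¬ (l:ℕ) = M + N by omega),
      if_pos (show (l:ℕ) ≤ M by omega), h0]
    rw [show (-(((0:ℕ)):ℤ)) = 0 by simp, zpow_zero, one_mul]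
  · by_cases hlT : (l:ℕ) = M + N
    · rw [if_neg hl0, if_pos hlT, if_pos hlT]
    · rw [if_neg hl0, if_neg hlT, if_neg hlT]
      by_cases hlM : (l:ℕ) ≤ M
      · rw [if_pos hlM, show p8E M (l:ℕ) = -((l:ℕ):ℤ) by unfold p8E; rw [if_pos hlM]]
      · rw [if_neg hlM,
          show p8E M (l:ℕ) = ((l:ℕ):ℤ) - 2*M by unfold p8E; rw [if_neg hlM]]
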